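/- For each context-free grammar G = (N, T, P, S) there exists a context-free grammar G' = (N', T, P', S) in Dyck normal form such that L(G) = L(G'). -/

import Mathlib

namespace CS

/-! ### Brackets and Dyck languages -/

/-- A bracket over `k` letters: `(i, true)` is the left bracket `[ᵢ` and
`(i, false)` is the right bracket `]ᵢ`. -/
abbrev Bracket (k : ℕ) : Type := Fin k × Bool

/-- The one-sided Dyck language `D_k` over `k` letters, i.e. the language generated by the
context-free grammar with rules `S → [ᵢ S ]ᵢ`, `S → SS`, `S → [ᵢ ]ᵢ` for `1 ≤ i ≤ k`. -/
inductive IsDyck {k : ℕ} : List (Bracket k) → Prop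
  | pair (i : Fin k) : IsDyck [(i, true), (i, false)]
  | wrap (i : Fin k) {w : List (Bracket k)} (hw : IsDyck w) :
      IsDyck ((i, true) :: w ++ [(i, false)])
  | concat {u v : List (Bracket k)} (hu : IsDyck u) (hv : IsDyck v) : IsDyck (u ++ v)

/-- The number of left (open) brackets in `w`. -/
def opens {k : ℕ} (w : List (Bracket k)) : ℕ := (w.filter fun b => b.2).length

/-- The number of right (close) brackets in `w`. -/
def closes {k : ℕ} (w : List (Bracket k)) : ℕ := (w.filter fun b => !b.2).length

/-- A string is balanced if it has as many left brackets as right brackets and every prefix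
has at least as many left brackets as right brackets.  (This is the balancedness of the image
of the string under the homomorphism `h` sending every `[ᵢ` to `[₁` and every `]ᵢ` to `]₁`.) -/
def IsBalanced {k : ℕ} (w : List (Bracket k)) : Prop :=
  opens w = closes w ∧ ∀ p : List (Bracket k), p <+: w → closes p ≤ opens p

/-- The substring `w_{i:j}` of `w` starting at the `i`-th position and ending at the `j`-th
position (1-indexed, inclusive). -/
def substr {α : Type*} (w : List α) (i j : ℕ) : List α := (w.drop (i - 1)).take (j - i + 1)

/-- `(i, j)` is a matched pair of `w` if `1 ≤ i ≤ j ≤ |w|` and `h(w_{i:j})` is balanced. -/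
def MatchedPair {k : ℕ} (w : List (Bracket k)) (i j : ℕ) : Prop :=
  1 ≤ i ∧ i ≤ j ∧ j ≤ w.length ∧ IsBalanced (substr w i j)

/-- `(i, j)` is a nested pair of `w` if it is a matched pair and either `j = i + 1` or
`(i + 1, j - 1)` is a matched pair. -/
def NestedPair {k : ℕ} (w : List (Bracket k)) (i j : ℕ) : Prop :=
  MatchedPair w i j ∧ (j = i + 1 ∨ MatchedPair w (i + 1) (j - 1))

/-- The homomorphism `h_{k'}` keeping only the brackets indexed by `k'` (sent to `[₁`/`]₁`)
and erasing all other brackets. -/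
def projIdx {k : ℕ} (i : Fin k) (w : List (Bracket k)) : List (Bracket 1) :=
  (w.filter fun b => decide (b.1 = i)).map fun b => ((0 : Fin 1), b.2)

/-! ### Grammars: Chomsky and Dyck normal forms -/

variable {T : Type}

/-- Chomsky normal form: every rule has the form `A → BC` or `A → a`, except possibly
`S → λ`, and the initial nonterminal never occurs on the right-hand side of a rule. -/
def IsChomskyNF (g : ContextFreeGrammar T) : Prop :=
  (∀ r ∈ g.rules,
      (∃ B C : g.NT, r.output = [Symbol.nonterminal B, Symbol.nonterminal C]) ∨
      (∃ a : T, r.output = [Symbol.terminal a]) ∨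
      (r.input = g.initial ∧ r.output = [])) ∧
  (∀ r ∈ g.rules, Symbol.nonterminal g.initial ∉ r.output)

/-- Dyck normal form (Definition 1.1):
(1) Chomsky normal form;
(2) if `A → a` with `A ≠ S` then no other rule rewrites `A`;
(3) if some rule `X → AB` is in `P` then no rule of the form `X' → B'A` is in `P`
    (equivalently, no nonterminal occurs both as a left member and as a right member of
    right-hand sides of two-nonterminal rules);
(4) for rules `X → AB` and `X' → A'B` one has `A = A'`, and for rules `X → AB` and
    `X' → AB'` one has `B = B'`. -/
def IsDyckNF (g : ContextFreeGrammar T) : Prop :=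
  IsChomskyNF g ∧
  (∀ r ∈ g.rules, ∀ a : T, r.output = [Symbol.terminal a] → r.input ≠ g.initial →
      ∀ r' ∈ g.rules, r'.input = r.input → r' = r) ∧
  (∀ r ∈ g.rules, ∀ r' ∈ g.rules, ∀ A B B' : g.NT,
      r.output = [Symbol.nonterminal A, Symbol.nonterminal B] →
      r'.output ≠ [Symbol.nonterminal B', Symbol.nonterminal A]) ∧
  (∀ r ∈ g.rules, ∀ r' ∈ g.rules, ∀ A A' B B' : g.NT,
      r.output = [Symbol.nonterminal A, Symbol.nonterminal B] →
      r'.output = [Symbol.nonterminal A', Symbol.nonterminal B'] →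
      (B = B' → A = A') ∧ (A = A' → B = B'))

/-- Extension of a map on nonterminals to a map on symbols, acting as the identity on
terminal symbols. -/
def mapSym {N N' : Type*} (f : N → N') : Symbol T N → Symbol T N'
  | .terminal t => .terminal t
  | .nonterminal A => .nonterminal (f A)

/-- One leftmost derivation step rewriting the (leftmost) nonterminal `A`:
everything to the left of the rewritten occurrence of `A` is terminal. -/
def LeftmostStep (g : ContextFreeGrammar T) (u v : List (Symbol T g.NT)) (A : g.NT) : Prop :=
  ∃ r ∈ g.rules, r.input = A ∧ ∃ (p : List T) (s : List (Symbol T g.NT)),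
    u = p.map Symbol.terminal ++ Symbol.nonterminal A :: s ∧
    v = p.map Symbol.terminal ++ r.output ++ s

/-- One leftmost derivation step. -/
def LeftmostProduces (g : ContextFreeGrammar T) (u v : List (Symbol T g.NT)) : Prop :=
  ∃ A : g.NT, LeftmostStep g u v A

/-- `LmTrace g u v l` : there is a leftmost derivation in `g` from `u` to `v` whose
consecutively rewritten nonterminals are listed (in order) in `l`. -/
inductive LmTrace (g : ContextFreeGrammar T) :
    List (Symbol T g.NT) → List (Symbol T g.NT) → List g.NT → Prop
  | refl (u : List (Symbol T g.NT)) : LmTrace g u u []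
  | tail {u v w : List (Symbol T g.NT)} {l : List g.NT} {A : g.NT}
      (huv : LmTrace g u v l) (hvw : LeftmostStep g v w A) : LmTrace g u w (l ++ [A])

/-- `t` is the trace-word of the terminal word `w` associated with some leftmost derivation of
`w` in `g`: the concatenation of the nonterminals consecutively rewritten in the derivation,
excluding the axiom (which is the first rewritten nonterminal).  Trace-words are only
associated with derivations `S ⇒ u₁ ⇒ ⋯ ⇒ u_{2n-1} = w` with `n ≥ 2`, i.e. `t ≠ []`. -/
def IsTraceWord (g : ContextFreeGrammar T) (w : List T) (t : List g.NT) : Prop :=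
  t ≠ [] ∧ LmTrace g [Symbol.nonterminal g.initial] (w.map Symbol.terminal) (g.initial :: t)

/-- `A` is rewritten by a terminal rule `A → t` (i.e. `φ(A) ∈ T`). -/
def RewritesToTerminal (g : ContextFreeGrammar T) (A : g.NT) : Prop :=
  ∃ r ∈ g.rules, r.input = A ∧ ∃ t : T, r.output = [Symbol.terminal t]

/-- The rule `A → a` belongs to the grammar. -/
def TerminalRule (g : ContextFreeGrammar T) (A : g.NT) (a : T) : Prop :=
  ∃ r ∈ g.rules, r.input = A ∧ r.output = [Symbol.terminal a]

/-- Linear grammar: all rules are of the forms `X → λ`, `X → t`, `X → tY`, `X → Yt`,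
`X → t₁Yt₂`. -/
def IsLinear (g : ContextFreeGrammar T) : Prop :=
  ∀ r ∈ g.rules,
    r.output = [] ∨
    (∃ t : T, r.output = [Symbol.terminal t]) ∨
    (∃ (t : T) (Y : g.NT), r.output = [Symbol.terminal t, Symbol.nonterminal Y]) ∨
    (∃ (t : T) (Y : g.NT), r.output = [Symbol.nonterminal Y, Symbol.terminal t]) ∨
    (∃ (t₁ t₂ : T) (Y : g.NT),
      r.output = [Symbol.terminal t₁, Symbol.nonterminal Y, Symbol.terminal t₂])

/-- Linear-Dyck normal form: Dyck normal form with `N⁽³⁾ = ∅`, i.e. in every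
two-nonterminal rule `X → AB` at least one of `A`, `B` is rewritten by a terminal rule. -/
def IsLinearDyckNF (g : ContextFreeGrammar T) : Prop :=
  IsDyckNF g ∧
  ∀ r ∈ g.rules, ∀ A B : g.NT,
    r.output = [Symbol.nonterminal A, Symbol.nonterminal B] →
    (RewritesToTerminal g A ∨ RewritesToTerminal g B)

/-- `(A, B)` is a pairwise pair of brackets in `N⁽¹⁾`: it occurs as the right-hand side of a
two-nonterminal rule and both members are rewritten by terminal rules. -/
def IsN1Pair (g : ContextFreeGrammar T) (A B : g.NT) : Prop :=
  (∃ r ∈ g.rules, r.output = [Symbol.nonterminal A, Symbol.nonterminal B]) ∧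
  RewritesToTerminal g A ∧ RewritesToTerminal g B

/-- `C` is a bracket of some pair in `N⁽¹⁾`. -/
def IsN1Bracket (g : ContextFreeGrammar T) (C : g.NT) : Prop :=
  ∃ A B : g.NT, IsN1Pair g A B ∧ (C = A ∨ C = B)

/-- The grammar over terminals `T` whose nonterminals are the axiom `S` (`none`) together
with the `2k` brackets `[₁, …, [ₖ, ]₁, …, ]ₖ`, with the given rules. -/
abbrev bracketGrammar (k : ℕ) (rs : Finset (ContextFreeRule T (Option (Bracket k)))) :
    ContextFreeGrammar T :=
  ⟨Option (Bracket k), none, rs⟩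

open ContextFreeGrammar

attribute [local instance] Classical.propDecidable

/-- n-step derivation. -/
def DerivesIn (g : ContextFreeGrammar.{0} T) : ℕ → List (Symbol T g.NT) → List (Symbol T g.NT) → Prop
  | 0, u, v => u = v
  | n+1, u, v => ∃ x, g.Produces u x ∧ DerivesIn g n x v

lemma DerivesIn.derives {g : ContextFreeGrammar.{0} T} :
    ∀ {n u v}, DerivesIn g n u v → g.Derives u v := by
  intro n
  induction n with
  | zero => intro u v h; cases h; rfl
  | succ n ih =>
    rintro u v ⟨x, hux, hxv⟩
    exact hux.trans_derives (ih hxv)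

lemma Derives.derivesIn {g : ContextFreeGrammar.{0} T} {u v : List (Symbol T g.NT)}
    (h : g.Derives u v) : ∃ n, DerivesIn g n u v := by
  induction h using Relation.ReflTransGen.head_induction_on with
  | refl => exact ⟨0, rfl⟩
  | head hab _ ih =>
    obtain ⟨n, hn⟩ := ih
    exact ⟨n + 1, _, hab, hn⟩

lemma append_eq_append_cons {α : Type*} {u v p q : List α} {x : α}
    (h : u ++ v = p ++ x :: q) :
    (∃ q1, u = p ++ x :: q1 ∧ q = q1 ++ v) ∨ (∃ p2, p = u ++ p2 ∧ v = p2 ++ x :: q) := by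
  induction u generalizing p with
  | nil => exact Or.inr ⟨p, by simp, by simpa using h⟩
  | cons a u' ih =>
    cases p with
    | nil =>
      obtain ⟨rfl, rfl⟩ : a = x ∧ u' ++ v = q := by simpa using h
      exact Or.inl ⟨u', by simp, rfl⟩
    | cons b p' =>
      obtain ⟨rfl, h'⟩ : a = b ∧ u' ++ v = p' ++ x :: q := by simpa using h
      rcases ih h' with ⟨q1, rfl, rfl⟩ | ⟨p2, rfl, rfl⟩
      · exact Or.inl ⟨q1, by simp, rfl⟩
      · exact Or.inr ⟨p2, by simp, rfl⟩

lemma derivesIn_append_split {g : ContextFreeGrammar.{0} T} :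
    ∀ {n} {u v y : List (Symbol T g.NT)}, DerivesIn g n (u ++ v) y →
      ∃ y1 y2 n1 n2, y = y1 ++ y2 ∧ n1 + n2 = n ∧ DerivesIn g n1 u y1 ∧ DerivesIn g n2 v y2 := by
  intro n
  induction n with
  | zero => rintro u v y rfl; exact ⟨u, v, 0, 0, rfl, rfl, rfl, rfl⟩
  | succ n ih =>
    rintro u v y ⟨x, ⟨r, hr, hrw⟩, hxy⟩
    obtain ⟨p, q, hpq, rfl⟩ := hrw.exists_parts
    rw [List.append_assoc] at hpq
    rcases append_eq_append_cons (by simpa using hpq) with ⟨q1, rfl, rfl⟩ | ⟨p2, rfl, rfl⟩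
    · -- rewrite inside u
      have hx : p ++ r.output ++ q1 ++ v = (p ++ r.output ++ q1) ++ v := by simp
      rw [show p ++ r.output ++ (q1 ++ v) = (p ++ r.output ++ q1) ++ v by simp] at hxy
      obtain ⟨y1, y2, n1, n2, rfl, hn, h1, h2⟩ := ih hxy
      refine ⟨y1, y2, n1 + 1, n2, rfl, by omega, ⟨p ++ r.output ++ q1, ⟨r, hr, ?_⟩, h1⟩, h2⟩
      simpa using ContextFreeRule.rewrites_of_exists_parts r p q1
    · -- rewrite inside v
      rw [show u ++ p2 ++ r.output ++ q = u ++ (p2 ++ r.output ++ q) by simp] at hxy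
      obtain ⟨y1, y2, n1, n2, rfl, hn, h1, h2⟩ := ih hxy
      refine ⟨y1, y2, n1, n2 + 1, rfl, by omega, h1, ⟨p2 ++ r.output ++ q, ⟨r, hr, ?_⟩, h2⟩⟩
      simpa using ContextFreeRule.rewrites_of_exists_parts r p2 q

lemma singleton_eq_append_cons {α : Type*} {p q : List α} {x y : α}
    (h : ([y] : List α) = p ++ x :: q) : p = [] ∧ q = [] ∧ x = y := by
  cases p with
  | nil => simpa [eq_comm, and_comm] using h
  | cons a p' =>
    exfalso
    have := congrArg List.length h
    simp at this

/-- Inversion for derivations starting at a single nonterminal. -/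
lemma derivesIn_nt_inv {g : ContextFreeGrammar.{0} T} {n : ℕ} {A : g.NT}
    {y : List (Symbol T g.NT)} (h : DerivesIn g (n + 1) [Symbol.nonterminal A] y) :
    ∃ r ∈ g.rules, r.input = A ∧ DerivesIn g n r.output y := by
  obtain ⟨x, ⟨r, hr, hrw⟩, hxy⟩ := h
  obtain ⟨p, q, hpq, rfl⟩ := hrw.exists_parts
  rw [List.append_assoc] at hpq
  have hpq' : ([Symbol.nonterminal A] : List (Symbol T g.NT)) =
      p ++ Symbol.nonterminal r.input :: q := by simpa using hpq
  obtain ⟨rfl, rfl, hA⟩ := singleton_eq_append_cons hpq'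
  refine ⟨r, hr, by have := hA.symm; simp at this; exact this.symm, by simpa using hxy⟩

lemma nonterminal_not_mem_map_terminal {N : Type} {w : List T} {A : N} :
    Symbol.nonterminal A ∉ (w.map Symbol.terminal : List (Symbol T N)) := by
  intro h
  obtain ⟨a, -, ha⟩ := List.mem_map.mp h
  exact nomatch ha

/-- A string of terminals derives only itself. -/
lemma derivesIn_terminal_eq {g : ContextFreeGrammar.{0} T} {n : ℕ} {w : List T}
    {y : List (Symbol T g.NT)} (h : DerivesIn g n (w.map Symbol.terminal) y) :
    y = w.map Symbol.terminal := by
  cases n with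
  | zero => exact h.symm
  | succ n =>
    exfalso
    obtain ⟨x, ⟨r, hr, hrw⟩, -⟩ := h
    obtain ⟨p, q, hpq, -⟩ := hrw.exists_parts
    apply nonterminal_not_mem_map_terminal (A := r.input) (w := w)
    rw [hpq]
    simp

lemma map_terminal_eq_nt_single {N : Type} {w : List T} {A : N}
    (h : (w.map Symbol.terminal : List (Symbol T N)) = [Symbol.nonterminal A]) : False := by
  cases w with
  | nil => simp at h
  | cons a w' =>
    cases w' <;> simp_all

lemma map_terminal_eq_terminal_single {N : Type} {w : List T} {a : T}
    (h : (w.map Symbol.terminal : List (Symbol T N)) = [Symbol.terminal a]) : w = [a] := by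
  cases w with
  | nil => simp at h
  | cons b w' => cases w' <;> simp_all

/-- General simulation lemma: if every rule of `g` is simulable in `g'` under the
string homomorphism `φ` (fixing terminals), then derivations transfer. -/
lemma lift_derives {g g' : ContextFreeGrammar.{0} T}
    (φ : Symbol T g.NT → List (Symbol T g'.NT))
    (hT : ∀ a : T, φ (Symbol.terminal a) = [Symbol.terminal a])
    (hR : ∀ r ∈ g.rules, g'.Derives (φ (Symbol.nonterminal r.input)) (r.output.flatMap φ))
    {u v : List (Symbol T g.NT)} (h : g.Derives u v) :
    g'.Derives (u.flatMap φ) (v.flatMap φ) := by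
  induction h with
  | refl => rfl
  | tail _ step ih =>
    obtain ⟨r, hr, hrw⟩ := step
    obtain ⟨p, q, rfl, rfl⟩ := hrw.exists_parts
    refine ih.trans ?_
    simp only [List.flatMap_append]
    have := ((hR r hr).append_right (q.flatMap φ)).append_left (p.flatMap φ)
    simpa [List.append_assoc] using this

lemma flatMap_map_terminal {N N' : Type} (φ : Symbol T N → List (Symbol T N'))
    (hT : ∀ a : T, φ (Symbol.terminal a) = [Symbol.terminal a]) (w : List T) :
    ((w.map Symbol.terminal : List (Symbol T N)).flatMap φ) = w.map Symbol.terminal := by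
  induction w with
  | nil => rfl
  | cons a w ih => simp [hT, ih]

/-- Pointwise derivation lemma. -/
lemma derives_flatMap_of_pointwise {g : ContextFreeGrammar.{0} T}
    (φ : Symbol T g.NT → List (Symbol T g.NT)) :
    ∀ (l : List (Symbol T g.NT)), (∀ x ∈ l, g.Derives [x] (φ x)) →
      g.Derives l (l.flatMap φ) := by
  intro l
  induction l with
  | nil => intro _; rfl
  | cons x l ih =>
    intro h
    have h1 : g.Derives [x] (φ x) := h x (by simp)
    have h2 : g.Derives l (l.flatMap φ) := ih fun y hy => h y (by simp [hy])
    have s1 : g.Derives (x :: l) ([x] ++ l.flatMap φ) := by simpa using h2.append_left [x]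
    have s2 : g.Derives ([x] ++ l.flatMap φ) (φ x ++ l.flatMap φ) := h1.append_right _
    simpa using s1.trans s2

lemma mem_language_iff' (g : ContextFreeGrammar.{0} T) (w : List T) :
    w ∈ g.language ↔ g.Derives [Symbol.nonterminal g.initial] (w.map Symbol.terminal) :=
  Iff.rfl

/-! ### Stage 1: start symbol, terminal separation, binarization -/

/-- Rule outputs have one of the four CNF-ish shapes (ε, terminal, unit, pair). -/
def Shape4 (g : ContextFreeGrammar.{0} T) : Prop :=
  ∀ r ∈ g.rules, r.output = [] ∨ (∃ a, r.output = [Symbol.terminal a]) ∨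
    (∃ B, r.output = [Symbol.nonterminal B]) ∨
    (∃ B C, r.output = [Symbol.nonterminal B, Symbol.nonterminal C])

/-- Initial symbol does not occur on right-hand sides. -/
def NoInitRHS (g : ContextFreeGrammar.{0} T) : Prop :=
  ∀ r ∈ g.rules, Symbol.nonterminal g.initial ∉ r.output

variable (G : ContextFreeGrammar.{0} T)

abbrev NT1 : Type := Option (G.NT ⊕ (ContextFreeRule T G.NT × ℕ) ⊕ T)

def embN (A : G.NT) : NT1 G := some (Sum.inl A)
def chainN (r : ContextFreeRule T G.NT) (i : ℕ) : NT1 G := some (Sum.inr (Sum.inl (r, i)))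
def wrapN (a : T) : NT1 G := some (Sum.inr (Sum.inr a))

def wrap : Symbol T G.NT → Symbol T (NT1 G)
  | .terminal a => .nonterminal (wrapN G a)
  | .nonterminal B => .nonterminal (embN G B)

def oGet (r : ContextFreeRule T G.NT) (i : ℕ) : Symbol T G.NT :=
  r.output.getD i (Symbol.nonterminal r.input)

def inputAt (r : ContextFreeRule T G.NT) (i : ℕ) : NT1 G :=
  if i = 0 then embN G r.input else chainN G r i

def ruleAt (r : ContextFreeRule T G.NT) (i : ℕ) : ContextFreeRule T (NT1 G) :=
  ⟨inputAt G r i,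
    if i = r.output.length - 1 then [wrap G (oGet G r i)]
    else [wrap G (oGet G r i), Symbol.nonterminal (chainN G r (i + 1))]⟩

noncomputable def rulesFor (r : ContextFreeRule T G.NT) : Finset (ContextFreeRule T (NT1 G)) :=
  if r.output = [] then {⟨embN G r.input, []⟩}
  else (Finset.range r.output.length).image (ruleAt G r)

noncomputable def termsIn (r : ContextFreeRule T G.NT) : Finset T :=
  (r.output.filterMap (fun s => match s with | .terminal a => some a | _ => none)).toFinset

def startRule : ContextFreeRule T (NT1 G) :=
  ⟨none, [Symbol.nonterminal (embN G G.initial)]⟩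

noncomputable def G1 : ContextFreeGrammar.{0} T :=
  ⟨NT1 G, none,
    insert (startRule G)
      ((G.rules.biUnion (rulesFor G)) ∪
        ((G.rules.biUnion (termsIn G)).image fun a => ⟨wrapN G a, [Symbol.terminal a]⟩))⟩

attribute [reducible] G1

lemma wrap_exists_nt (s : Symbol T G.NT) : ∃ B, wrap G s = Symbol.nonterminal B := by
  cases s <;> exact ⟨_, rfl⟩

lemma wrap_ne_none (s : Symbol T G.NT) : wrap G s ≠ Symbol.nonterminal none := by
  cases s <;> simp [wrap, wrapN, embN]

lemma shape4_G1 : Shape4 (G1 G) := by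
  intro r hr
  simp only [G1, Finset.mem_insert, Finset.mem_union, Finset.mem_biUnion, Finset.mem_image]
    at hr
  rcases hr with rfl | ⟨⟨r0, hr0, hmem⟩ | ⟨a, ha, rfl⟩⟩
  · exact Or.inr (Or.inr (Or.inl ⟨_, rfl⟩))
  · rw [rulesFor] at hmem
    split at hmem
    · simp at hmem; subst hmem; exact Or.inl rfl
    · simp only [Finset.mem_image, Finset.mem_range] at hmem
      obtain ⟨i, hi, rfl⟩ := hmem
      obtain ⟨B, hB⟩ := wrap_exists_nt G (oGet G r0 i)
      rw [ruleAt]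
      split
      · exact Or.inr (Or.inr (Or.inl ⟨B, by simp [hB]⟩))
      · exact Or.inr (Or.inr (Or.inr ⟨B, chainN G r0 (i + 1), by simp [hB]⟩))
  · exact Or.inr (Or.inl ⟨a, rfl⟩)

lemma noInitRHS_G1 : NoInitRHS (G1 G) := by
  intro r hr
  have hinit : (G1 G).initial = none := rfl
  simp only [G1, Finset.mem_insert, Finset.mem_union, Finset.mem_biUnion, Finset.mem_image]
    at hr
  rcases hr with rfl | ⟨⟨r0, hr0, hmem⟩ | ⟨a, ha, rfl⟩⟩
  · simp [startRule, hinit, embN]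
  · rw [rulesFor] at hmem
    split at hmem
    · simp at hmem; subst hmem; simp [hinit]
    · simp only [Finset.mem_image, Finset.mem_range] at hmem
      obtain ⟨i, hi, rfl⟩ := hmem
      rw [ruleAt, hinit]
      split
      · simp only [List.mem_singleton]
        exact fun h => wrap_ne_none G _ h.symm
      · intro h
        rcases List.mem_pair.mp h with h | h
        · exact wrap_ne_none G _ h.symm
        · simp [chainN] at h
  · simp [hinit]

def emb0 : Symbol T G.NT → List (Symbol T (NT1 G))
  | .terminal a => [.terminal a]
  | .nonterminal A => [.nonterminal (embN G A)]

def unwrap : Symbol T (NT1 G) → List (Symbol T (NT1 G))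
  | .nonterminal (some (Sum.inr (Sum.inr a))) => [.terminal a]
  | s => [s]

def back1 : Symbol T (NT1 G) → List (Symbol T G.NT)
  | .terminal a => [.terminal a]
  | .nonterminal none => [.nonterminal G.initial]
  | .nonterminal (some (Sum.inl A)) => [.nonterminal A]
  | .nonterminal (some (Sum.inr (Sum.inl p))) => p.1.output.drop p.2
  | .nonterminal (some (Sum.inr (Sum.inr a))) => [.terminal a]

lemma unwrap_wrap (x : Symbol T G.NT) : unwrap G (wrap G x) = emb0 G x := by
  cases x <;> rfl

lemma back1_wrap (x : Symbol T G.NT) : back1 G (wrap G x) = [x] := by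
  cases x <;> rfl

lemma startRule_mem : startRule G ∈ (G1 G).rules := Finset.mem_insert_self _ _

lemma ruleAt_mem {r : ContextFreeRule T G.NT} (hr : r ∈ G.rules) {i : ℕ}
    (hi : i < r.output.length) : ruleAt G r i ∈ (G1 G).rules := by
  have hne : r.output ≠ [] := by intro h; rw [h] at hi; simp at hi
  apply Finset.mem_insert_of_mem
  apply Finset.mem_union_left
  rw [Finset.mem_biUnion]
  exact ⟨r, hr, by rw [rulesFor, if_neg hne]; exact Finset.mem_image.mpr ⟨i, by simpa, rfl⟩⟩

lemma epsRule_mem {r : ContextFreeRule T G.NT} (hr : r ∈ G.rules) (h : r.output = []) :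
    (⟨embN G r.input, []⟩ : ContextFreeRule T (NT1 G)) ∈ (G1 G).rules := by
  apply Finset.mem_insert_of_mem
  apply Finset.mem_union_left
  rw [Finset.mem_biUnion]
  exact ⟨r, hr, by rw [rulesFor, if_pos h]; simp⟩

lemma wrapperRule_mem {r : ContextFreeRule T G.NT} (hr : r ∈ G.rules) {a : T}
    (ha : Symbol.terminal a ∈ r.output) :
    (⟨wrapN G a, [Symbol.terminal a]⟩ : ContextFreeRule T (NT1 G)) ∈ (G1 G).rules := by
  apply Finset.mem_insert_of_mem
  apply Finset.mem_union_right
  rw [Finset.mem_image]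
  refine ⟨a, Finset.mem_biUnion.mpr ⟨r, hr, ?_⟩, rfl⟩
  rw [termsIn, List.mem_toFinset, List.mem_filterMap]
  exact ⟨Symbol.terminal a, ha, rfl⟩

lemma chain_derives {r : ContextFreeRule T G.NT} (hr : r ∈ G.rules) :
    ∀ k i, i < r.output.length → r.output.length - i = k →
      (G1 G).Derives [Symbol.nonterminal (inputAt G r i)] ((r.output.drop i).map (wrap G)) := by
  intro k
  induction k with
  | zero => intro i hi h; omega
  | succ k ih =>
    intro i hi hk
    have hstep : (G1 G).Produces [Symbol.nonterminal (inputAt G r i)] ((ruleAt G r i).output) :=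
      ⟨ruleAt G r i, ruleAt_mem G hr hi, by exact ContextFreeRule.Rewrites.input_output⟩
    have hdrop : r.output.drop i = oGet G r i :: r.output.drop (i + 1) := by
      rw [List.drop_eq_getElem_cons hi, oGet, List.getD_eq_getElem r.output _ hi]
    by_cases hlast : i = r.output.length - 1
    · have h1 : r.output.drop (i + 1) = [] := List.drop_eq_nil_of_le (by omega)
      have : (ruleAt G r i).output = (r.output.drop i).map (wrap G) := by
        rw [ruleAt, if_pos hlast, hdrop, h1]; rfl
      exact (this ▸ hstep).single
    · have hi1 : i + 1 < r.output.length := by omega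
      have hout : (ruleAt G r i).output =
          [wrap G (oGet G r i), Symbol.nonterminal (chainN G r (i + 1))] := by
        rw [ruleAt, if_neg hlast]
      have ih1 := ih (i + 1) hi1 (by omega)
      rw [inputAt, if_neg (by omega)] at ih1
      have happ := ih1.append_left [wrap G (oGet G r i)]
      refine hstep.trans_derives ?_
      rw [hout, hdrop]
      simpa using happ

lemma G1_simulates_rule {r : ContextFreeRule T G.NT} (hr : r ∈ G.rules) :
    (G1 G).Derives [Symbol.nonterminal (embN G r.input)] (r.output.flatMap (emb0 G)) := by
  rcases eq_or_ne r.output [] with h | h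
  · rw [h]
    exact (Produces.single ⟨_, epsRule_mem G hr h, by
      simpa using ContextFreeRule.Rewrites.input_output⟩)
  · have hlen : 0 < r.output.length := List.length_pos_iff.mpr h
    have h1 := chain_derives G hr r.output.length 0 hlen (by omega)
    rw [inputAt, if_pos rfl, List.drop_zero] at h1
    refine h1.trans ?_
    have h2 : (r.output.map (wrap G)).flatMap (unwrap G) = r.output.flatMap (emb0 G) := by
      rw [List.flatMap_map]
      exact List.flatMap_congr fun x _ => unwrap_wrap G x
    rw [← h2]
    apply derives_flatMap_of_pointwise
    intro x hx
    obtain ⟨y, hy, rfl⟩ := List.mem_map.mp hx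
    cases y with
    | terminal a =>
      rw [unwrap_wrap]
      exact (Produces.single ⟨_, wrapperRule_mem G hr hy, by
        exact ContextFreeRule.Rewrites.input_output (r := ⟨wrapN G a, [Symbol.terminal a]⟩)⟩)
    | nonterminal B => rw [unwrap_wrap]; rfl

lemma lang_G1 : G.language = (G1 G).language := by
  ext w
  constructor
  · intro hw
    have h := lift_derives (g := G) (g' := G1 G) (emb0 G) (fun a => rfl)
      (fun r hr => by simpa [emb0] using G1_simulates_rule G hr) hw
    rw [flatMap_map_terminal _ (fun a => rfl)] at h
    have hstart : (G1 G).Produces [Symbol.nonterminal none]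
        [Symbol.nonterminal (embN G G.initial)] :=
      ⟨startRule G, startRule_mem G, by exact ContextFreeRule.Rewrites.input_output⟩
    exact hstart.trans_derives (by simpa [emb0] using h)
  · intro hw
    have hR : ∀ r ∈ (G1 G).rules,
        G.Derives (back1 G (Symbol.nonterminal r.input)) (r.output.flatMap (back1 G)) := by
      intro r1 hr1
      simp only [G1, Finset.mem_insert, Finset.mem_union, Finset.mem_biUnion, Finset.mem_image]
        at hr1
      rcases hr1 with rfl | ⟨⟨r0, hr0, hmem⟩ | ⟨a, ha, rfl⟩⟩
      · rfl
      · rw [rulesFor] at hmem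
        split at hmem
        · simp only [Finset.mem_singleton] at hmem
          subst hmem
          simp only [back1, List.flatMap_nil]
          exact (Produces.single ⟨r0, hr0, by
            have := ContextFreeRule.Rewrites.input_output (r := r0)
            rwa [‹r0.output = _›] at this⟩)
        · simp only [Finset.mem_image, Finset.mem_range] at hmem
          obtain ⟨i, hi, rfl⟩ := hmem
          have hdrop : r0.output.drop i = oGet G r0 i :: r0.output.drop (i + 1) := by
            rw [List.drop_eq_getElem_cons hi, oGet, List.getD_eq_getElem r0.output _ hi]
          have hflat : (ruleAt G r0 i).output.flatMap (back1 G) = r0.output.drop i := by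
            rw [ruleAt]
            split
            · have h1 : r0.output.drop (i + 1) = [] := List.drop_eq_nil_of_le (by omega)
              rw [hdrop, h1]
              simp [back1_wrap]
            · rw [hdrop]
              simp only [List.flatMap_cons, List.flatMap_nil, List.append_nil, back1_wrap]
              rfl
          rw [hflat]
          show G.Derives (back1 G (Symbol.nonterminal (inputAt G r0 i))) _
          rw [inputAt]
          split
          · subst ‹i = 0›
            simp only [back1, List.drop_zero]
            exact (Produces.single ⟨r0, hr0, by
              exact ContextFreeRule.Rewrites.input_output⟩)
          · rfl
      · rfl
    have h := lift_derives (back1 G) (fun a => rfl) hR hw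
    rw [flatMap_map_terminal _ (fun a => rfl)] at h
    simpa [back1] using h

/-! ### Stage 2: epsilon elimination -/

section Del
variable (g : ContextFreeGrammar.{0} T)

def Nullable (A : g.NT) : Prop := g.Derives [Symbol.nonterminal A] []

noncomputable def dropRules (r : ContextFreeRule T g.NT) : Finset (ContextFreeRule T g.NT) :=
  (r.output.toFinset.image (fun s => (⟨r.input, [s]⟩ : ContextFreeRule T g.NT))).filter
    (fun r' => ∃ B C, r.output = [Symbol.nonterminal B, Symbol.nonterminal C] ∧
      ((r' = ⟨r.input, [Symbol.nonterminal B]⟩ ∧ Nullable g C) ∨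
       (r' = ⟨r.input, [Symbol.nonterminal C]⟩ ∧ Nullable g B)))

lemma mem_dropRules {r r' : ContextFreeRule T g.NT} :
    r' ∈ dropRules g r ↔ ∃ B C, r.output = [Symbol.nonterminal B, Symbol.nonterminal C] ∧
      ((r' = ⟨r.input, [Symbol.nonterminal B]⟩ ∧ Nullable g C) ∨
       (r' = ⟨r.input, [Symbol.nonterminal C]⟩ ∧ Nullable g B)) := by
  rw [dropRules, Finset.mem_filter]
  constructor
  · exact fun h => h.2
  · rintro ⟨B, C, hout, h⟩
    refine ⟨Finset.mem_image.mpr ?_, B, C, hout, h⟩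
    rcases h with ⟨rfl, -⟩ | ⟨rfl, -⟩
    · exact ⟨Symbol.nonterminal B, by simp [hout], rfl⟩
    · exact ⟨Symbol.nonterminal C, by simp [hout], rfl⟩

noncomputable def G2 : ContextFreeGrammar.{0} T :=
  ⟨g.NT, g.initial,
    ((g.rules.filter (fun r => r.output ≠ [])) ∪ g.rules.biUnion (dropRules g)) ∪
      (if Nullable g g.initial then {⟨g.initial, []⟩} else ∅)⟩

attribute [reducible] G2

lemma mem_G2 {r : ContextFreeRule T g.NT} :
    r ∈ (G2 g).rules ↔
      (r ∈ g.rules ∧ r.output ≠ []) ∨ (∃ r0 ∈ g.rules, r ∈ dropRules g r0) ∨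
        (Nullable g g.initial ∧ r = ⟨g.initial, []⟩) := by
  simp only [G2, Finset.mem_union, Finset.mem_filter, Finset.mem_biUnion]
  constructor
  · rintro ((h | h) | h)
    · exact Or.inl h
    · exact Or.inr (Or.inl h)
    · split at h
      · exact Or.inr (Or.inr ⟨‹_›, by simpa using h⟩)
      · simp at h
  · rintro (h | h | ⟨hN, rfl⟩)
    · exact Or.inl (Or.inl h)
    · exact Or.inl (Or.inr h)
    · exact Or.inr (by rw [if_pos hN]; simp)

lemma G2_sub (w : List T) (h : w ∈ (G2 g).language) : w ∈ g.language := by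
  have hR : ∀ r ∈ (G2 g).rules,
      g.Derives ((fun s => [s]) (Symbol.nonterminal r.input) : List (Symbol T g.NT))
        (r.output.flatMap (fun s => [s])) := by
    intro r hr
    rw [List.flatMap_singleton']
    rcases (mem_G2 g).mp hr with ⟨hg, -⟩ | ⟨r0, hr0, hd⟩ | ⟨hN, rfl⟩
    · exact (Produces.single ⟨r, hg, ContextFreeRule.Rewrites.input_output⟩)
    · obtain ⟨B, C, hout, hcase⟩ := (mem_dropRules g).mp hd
      have hstep : g.Produces [Symbol.nonterminal r0.input]
          [Symbol.nonterminal B, Symbol.nonterminal C] :=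
        ⟨r0, hr0, by rw [← hout]; exact ContextFreeRule.Rewrites.input_output⟩
      rcases hcase with ⟨rfl, hNC⟩ | ⟨rfl, hNB⟩
      · refine hstep.trans_derives ?_
        have := Derives.append_left (hNC : g.Derives [Symbol.nonterminal C] [])
          [Symbol.nonterminal B]
        simpa using this
      · refine hstep.trans_derives ?_
        have := Derives.append_right (hNB : g.Derives [Symbol.nonterminal B] [])
          [Symbol.nonterminal C]
        simpa using this
    · exact hN
  have h2 := lift_derives (g := G2 g) (g' := g) (fun s => [s]) (fun a => rfl) hR h
  rw [flatMap_map_terminal _ (fun a => rfl)] at h2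
  simpa using h2

lemma del_hard (hsh : Shape4 g) : ∀ n (A : g.NT) (w : List T),
    DerivesIn g n [Symbol.nonterminal A] (w.map Symbol.terminal) → w ≠ [] →
      (G2 g).Derives [Symbol.nonterminal A] (w.map Symbol.terminal) := by
  intro n
  induction n using Nat.strong_induction_on with
  | _ n ih =>
    intro A w h hw
    cases n with
    | zero => exact absurd h.symm (by intro hh; exact map_terminal_eq_nt_single hh)
    | succ n =>
      obtain ⟨r, hr, hinp, hd⟩ := derivesIn_nt_inv h
      have hkeep : r.output ≠ [] → r ∈ (G2 g).rules := fun hne =>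
        (mem_G2 g).mpr (Or.inl ⟨hr, hne⟩)
      rcases hsh r hr with hout | ⟨a, hout⟩ | ⟨B, hout⟩ | ⟨B, C, hout⟩
      · rw [hout] at hd
        have : (w.map Symbol.terminal : List (Symbol T g.NT)) = [] :=
          (derivesIn_terminal_eq (w := []) (by simpa using hd)).symm ▸ rfl
        exact absurd (by simpa using (derivesIn_terminal_eq (w := ([] : List T))
          (by simpa using hd)).symm) (by simpa using hw)
      · rw [hout] at hd
        have hweq : (w.map Symbol.terminal : List (Symbol T g.NT)) = [Symbol.terminal a] :=
          derivesIn_terminal_eq (w := [a]) (by simpa using hd)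
        refine Produces.single ⟨r, hkeep (by simp [hout]), ?_⟩
        rw [hweq, ← hout, ← hinp]
        exact ContextFreeRule.Rewrites.input_output
      · rw [hout] at hd
        have hder := ih n (by omega) B w hd hw
        refine Produces.trans_derives ⟨r, hkeep (by simp [hout]), ?_⟩ hder
        rw [← hinp]
        have := ContextFreeRule.Rewrites.input_output (r := r)
        rwa [hout] at this
      · rw [hout] at hd
        have hd' : DerivesIn g n ([Symbol.nonterminal B] ++ [Symbol.nonterminal C])
            (w.map Symbol.terminal) := by simpa using hd
        obtain ⟨y1, y2, n1, n2, hy, hn, h1, h2⟩ := derivesIn_append_split hd'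
        obtain ⟨w1, w2, rfl, hw1, hw2⟩ := List.map_eq_append_iff.mp hy
        subst hw1; subst hw2
        rcases eq_or_ne w1 [] with rfl | hw1ne
        · have hNB : Nullable g B := (by simpa using h1 : DerivesIn g n1 _ _).derives
          have hder := ih n2 (by omega) C w2 h2 (by simpa using hw)
          have hmem : (⟨A, [Symbol.nonterminal C]⟩ : ContextFreeRule T g.NT) ∈ (G2 g).rules :=
            (mem_G2 g).mpr (Or.inr (Or.inl ⟨r, hr, (mem_dropRules g).mpr
              ⟨B, C, hout, Or.inr ⟨by rw [hinp], hNB⟩⟩⟩))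
          refine Produces.trans_derives ⟨_, hmem, ?_⟩ (by simpa using hder)
          simpa using ContextFreeRule.Rewrites.input_output
            (r := (⟨A, [Symbol.nonterminal C]⟩ : ContextFreeRule T g.NT))
        rcases eq_or_ne w2 [] with rfl | hw2ne
        · have hNC : Nullable g C := (by simpa using h2 : DerivesIn g n2 _ _).derives
          have hder := ih n1 (by omega) B w1 h1 hw1ne
          have hmem : (⟨A, [Symbol.nonterminal B]⟩ : ContextFreeRule T g.NT) ∈ (G2 g).rules :=
            (mem_G2 g).mpr (Or.inr (Or.inl ⟨r, hr, (mem_dropRules g).mpr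
              ⟨B, C, hout, Or.inl ⟨by rw [hinp], hNC⟩⟩⟩))
          refine Produces.trans_derives ⟨_, hmem, ?_⟩ (by simpa using hder)
          simpa using ContextFreeRule.Rewrites.input_output
            (r := (⟨A, [Symbol.nonterminal B]⟩ : ContextFreeRule T g.NT))
        · have hder1 := ih n1 (by omega) B w1 h1 hw1ne
          have hder2 := ih n2 (by omega) C w2 h2 hw2ne
          have hstep : (G2 g).Produces [Symbol.nonterminal A]
              [Symbol.nonterminal B, Symbol.nonterminal C] := by
            refine ⟨r, hkeep (by simp [hout]), ?_⟩
            rw [← hout, ← hinp]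
            exact ContextFreeRule.Rewrites.input_output
          refine hstep.trans_derives ?_
          have c1 := hder1.append_right [Symbol.nonterminal C]
          have c2 := hder2.append_left (w1.map Symbol.terminal)
          rw [List.map_append]
          have c1' : (G2 g).Derives [Symbol.nonterminal B, Symbol.nonterminal C]
              (w1.map Symbol.terminal ++ [Symbol.nonterminal C]) := by simpa using c1
          exact c1'.trans c2

lemma lang_G2 (hsh : Shape4 g) : g.language = (G2 g).language := by
  ext w
  constructor
  · intro hw
    rcases eq_or_ne w [] with rfl | hne
    · have hN : Nullable g g.initial := by simpa [Nullable] using hw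
      refine Produces.single ⟨⟨g.initial, []⟩, (mem_G2 g).mpr (Or.inr (Or.inr ⟨hN, rfl⟩)), ?_⟩
      simpa using ContextFreeRule.Rewrites.input_output
        (r := (⟨g.initial, []⟩ : ContextFreeRule T g.NT))
    · obtain ⟨n, hn⟩ := Derives.derivesIn hw
      exact del_hard g hsh n g.initial w hn hne
  · exact G2_sub g w

lemma shape4_G2 (hsh : Shape4 g) : Shape4 (G2 g) := by
  intro r hr
  rcases (mem_G2 g).mp hr with ⟨hg, -⟩ | ⟨r0, hr0, hd⟩ | ⟨-, rfl⟩
  · exact hsh r hg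
  · obtain ⟨B, C, -, hcase⟩ := (mem_dropRules g).mp hd
    rcases hcase with ⟨rfl, -⟩ | ⟨rfl, -⟩
    · exact Or.inr (Or.inr (Or.inl ⟨B, rfl⟩))
    · exact Or.inr (Or.inr (Or.inl ⟨C, rfl⟩))
  · exact Or.inl rfl

lemma eps_G2 {r : ContextFreeRule T g.NT} (hr : r ∈ (G2 g).rules) (h : r.output = []) :
    r.input = (G2 g).initial := by
  rcases (mem_G2 g).mp hr with ⟨-, hne⟩ | ⟨r0, -, hd⟩ | ⟨-, rfl⟩
  · exact absurd h hne
  · obtain ⟨B, C, -, hcase⟩ := (mem_dropRules g).mp hd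
    rcases hcase with ⟨rfl, -⟩ | ⟨rfl, -⟩ <;> simp at h
  · rfl

lemma noInitRHS_G2 (hno : NoInitRHS g) : NoInitRHS (G2 g) := by
  intro r hr
  have hinit : (G2 g).initial = g.initial := rfl
  rw [hinit]
  rcases (mem_G2 g).mp hr with ⟨hg, -⟩ | ⟨r0, hr0, hd⟩ | ⟨-, rfl⟩
  · exact hno r hg
  · obtain ⟨B, C, hout, hcase⟩ := (mem_dropRules g).mp hd
    have hBC := hno r0 hr0
    rw [hout] at hBC
    rcases hcase with ⟨rfl, -⟩ | ⟨rfl, -⟩ <;> simp_all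
  · simp

end Del

/-! ### Stage 3: unit rule elimination -/

section Unit
variable (g : ContextFreeGrammar.{0} T)

def unitStep (B C : g.NT) : Prop :=
  ∃ r ∈ g.rules, r.input = B ∧ r.output = [Symbol.nonterminal C]

def UnitDer : g.NT → g.NT → Prop := Relation.ReflTransGen (unitStep g)

def nonUnit (r : ContextFreeRule T g.NT) : Prop := ∀ B, r.output ≠ [Symbol.nonterminal B]

noncomputable def G3 : ContextFreeGrammar.{0} T :=
  ⟨g.NT, g.initial,
    (((g.rules.image (·.input)) ×ˢ g.rules).filter
        (fun p => nonUnit g p.2 ∧ UnitDer g p.1 p.2.input)).image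
      (fun p => ⟨p.1, p.2.output⟩)⟩

attribute [reducible] G3

lemma mem_G3 {r' : ContextFreeRule T g.NT} :
    r' ∈ (G3 g).rules ↔ ∃ A r, (∃ r0 ∈ g.rules, r0.input = A) ∧ r ∈ g.rules ∧ nonUnit g r ∧
      UnitDer g A r.input ∧ r' = ⟨A, r.output⟩ := by
  simp only [G3, Finset.mem_image, Finset.mem_filter, Finset.mem_product, Prod.exists]
  constructor
  · rintro ⟨A, r, ⟨⟨hA, hr⟩, hnu, hud⟩, rfl⟩
    exact ⟨A, r, hA, hr, hnu, hud, rfl⟩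
  · rintro ⟨A, r, ⟨r0, hr0, hr0i⟩, hr, hnu, hud, rfl⟩
    exact ⟨A, r, ⟨⟨⟨r0, hr0, hr0i⟩, hr⟩, hnu, hud⟩, rfl⟩

lemma unitDer_derives {A B : g.NT} (h : UnitDer g A B) :
    g.Derives [Symbol.nonterminal A] [Symbol.nonterminal B] := by
  induction h with
  | refl => rfl
  | tail _ hstep ih =>
    obtain ⟨r, hr, hinp, hout⟩ := hstep
    refine ih.trans_produces ⟨r, hr, ?_⟩
    rw [← hinp, ← hout]
    exact ContextFreeRule.Rewrites.input_output

lemma G3_sub (w : List T) (h : w ∈ (G3 g).language) : w ∈ g.language := by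
  have hR : ∀ r ∈ (G3 g).rules,
      g.Derives ((fun s => [s]) (Symbol.nonterminal r.input) : List (Symbol T g.NT))
        (r.output.flatMap (fun s => [s])) := by
    intro r' hr'
    rw [List.flatMap_singleton']
    obtain ⟨A, r, -, hr, -, hud, rfl⟩ := (mem_G3 g).mp hr'
    exact (unitDer_derives g hud).trans_produces ⟨r, hr, ContextFreeRule.Rewrites.input_output⟩
  have h2 := lift_derives (g := G3 g) (g' := g) (fun s => [s]) (fun a => rfl) hR h
  rw [flatMap_map_terminal _ (fun a => rfl)] at h2
  simpa using h2

lemma unitDer_mem_inputs {Z A : g.NT} (h : UnitDer g Z A) (hA : ∃ r ∈ g.rules, r.input = A) :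
    ∃ r0 ∈ g.rules, r0.input = Z := by
  rcases (Relation.ReflTransGen.cases_head h) with rfl | ⟨Y, hstep, -⟩
  · exact hA
  · obtain ⟨r, hr, hinp, -⟩ := hstep
    exact ⟨r, hr, hinp⟩

lemma unit_hard (hsh : Shape4 g) : ∀ n (A : g.NT) (w : List T),
    DerivesIn g n [Symbol.nonterminal A] (w.map Symbol.terminal) →
      ∀ Z, UnitDer g Z A → (G3 g).Derives [Symbol.nonterminal Z] (w.map Symbol.terminal) := by
  intro n
  induction n using Nat.strong_induction_on with
  | _ n ih =>
    intro A w h Z hZ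
    cases n with
    | zero => exact absurd h.symm (by intro hh; exact map_terminal_eq_nt_single hh)
    | succ n =>
      obtain ⟨r, hr, hinp, hd⟩ := derivesIn_nt_inv h
      rcases Classical.em (∃ B, r.output = [Symbol.nonterminal B]) with ⟨B, hout⟩ | hnu
      · rw [hout] at hd
        refine ih n (by omega) B w hd Z (hZ.tail ⟨r, hr, hinp, hout⟩)
      · have hnu' : nonUnit g r := fun B hB => hnu ⟨B, hB⟩
        have hZr : (⟨Z, r.output⟩ : ContextFreeRule T g.NT) ∈ (G3 g).rules :=
          (mem_G3 g).mpr ⟨Z, r, unitDer_mem_inputs g hZ ⟨r, hr, hinp⟩, hr, hnu',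
            hinp ▸ hZ, rfl⟩
        have hstep : (G3 g).Produces [Symbol.nonterminal Z] r.output :=
          ⟨⟨Z, r.output⟩, hZr, by
            simpa using ContextFreeRule.Rewrites.input_output
              (r := (⟨Z, r.output⟩ : ContextFreeRule T g.NT))⟩
        rcases hsh r hr with hout | ⟨a, hout⟩ | ⟨B, hout⟩ | ⟨B, C, hout⟩
        · rw [hout] at hd hstep
          have : (w.map Symbol.terminal : List (Symbol T g.NT)) = [] :=
            derivesIn_terminal_eq (w := ([] : List T)) (by simpa using hd)
          rw [this]
          exact hstep.single
        · rw [hout] at hd hstep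
          have hweq : (w.map Symbol.terminal : List (Symbol T g.NT)) = [Symbol.terminal a] :=
            derivesIn_terminal_eq (w := [a]) (by simpa using hd)
          rw [hweq]
          exact hstep.single
        · exact absurd hout (hnu' B)
        · rw [hout] at hd hstep
          have hd' : DerivesIn g n ([Symbol.nonterminal B] ++ [Symbol.nonterminal C])
              (w.map Symbol.terminal) := by simpa using hd
          obtain ⟨y1, y2, n1, n2, hy, hn, h1, h2⟩ := derivesIn_append_split hd'
          obtain ⟨w1, w2, rfl, hw1, hw2⟩ := List.map_eq_append_iff.mp hy
          subst hw1; subst hw2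
          have hder1 := ih n1 (by omega) B w1 h1 B Relation.ReflTransGen.refl
          have hder2 := ih n2 (by omega) C w2 h2 C Relation.ReflTransGen.refl
          refine hstep.trans_derives ?_
          have c1 := hder1.append_right [Symbol.nonterminal C]
          have c2 := hder2.append_left (w1.map Symbol.terminal)
          rw [List.map_append]
          have c1' : (G3 g).Derives [Symbol.nonterminal B, Symbol.nonterminal C]
              (w1.map Symbol.terminal ++ [Symbol.nonterminal C]) := by simpa using c1
          exact c1'.trans c2

lemma lang_G3 (hsh : Shape4 g) : g.language = (G3 g).language := by
  ext w
  constructor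
  · intro hw
    obtain ⟨n, hn⟩ := Derives.derivesIn hw
    exact unit_hard g hsh n g.initial w hn g.initial Relation.ReflTransGen.refl
  · exact G3_sub g w

lemma no_unitDer_initial (hno : NoInitRHS g) {Z : g.NT} (h : UnitDer g Z g.initial) :
    Z = g.initial := by
  rcases Relation.ReflTransGen.cases_tail h with rfl | ⟨Y, -, hstep⟩
  · rfl
  · obtain ⟨r, hr, -, hout⟩ := hstep
    exact absurd (by rw [hout]; simp) (hno r hr)

lemma G3_chomsky (hsh : Shape4 g)
    (heps : ∀ r ∈ g.rules, r.output = [] → r.input = g.initial)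
    (hno : NoInitRHS g) :
    (∀ r ∈ (G3 g).rules,
      (∃ B C, r.output = [Symbol.nonterminal B, Symbol.nonterminal C]) ∨
      (∃ a, r.output = [Symbol.terminal a]) ∨
      (r.input = (G3 g).initial ∧ r.output = [])) ∧ NoInitRHS (G3 g) := by
  constructor
  · intro r' hr'
    obtain ⟨A, r, -, hr, hnu, hud, rfl⟩ := (mem_G3 g).mp hr'
    rcases hsh r hr with hout | ⟨a, hout⟩ | ⟨B, hout⟩ | ⟨B, C, hout⟩
    · refine Or.inr (Or.inr ⟨?_, hout⟩)
      have := heps r hr hout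
      exact no_unitDer_initial g hno (this ▸ hud)
    · exact Or.inr (Or.inl ⟨a, hout⟩)
    · exact absurd hout (hnu B)
    · exact Or.inl ⟨B, C, hout⟩
  · intro r' hr'
    obtain ⟨A, r, -, hr, -, -, rfl⟩ := (mem_G3 g).mp hr'
    exact hno r hr

end Unit

/-! ### Stage 4: Dyck normal form from Chomsky normal form -/

section Dyck
variable (g : ContextFreeGrammar.{0} T)

def isPair (r : ContextFreeRule T g.NT) : Prop :=
  ∃ B C, r.output = [Symbol.nonterminal B, Symbol.nonterminal C]

def leftOf (r : ContextFreeRule T g.NT) : g.NT :=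
  match r.output with
  | [Symbol.nonterminal B, _] => B
  | _ => r.input

def rightOf (r : ContextFreeRule T g.NT) : g.NT :=
  match r.output with
  | [_, Symbol.nonterminal C] => C
  | _ => r.input

lemma leftOf_eq {r : ContextFreeRule T g.NT} {B C : g.NT}
    (h : r.output = [Symbol.nonterminal B, Symbol.nonterminal C]) : leftOf g r = B := by
  rw [leftOf, h]

lemma rightOf_eq {r : ContextFreeRule T g.NT} {B C : g.NT}
    (h : r.output = [Symbol.nonterminal B, Symbol.nonterminal C]) : rightOf g r = C := by
  rw [rightOf, h]

lemma pair_out {r : ContextFreeRule T g.NT} (h : isPair g r) :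
    r.output = [Symbol.nonterminal (leftOf g r), Symbol.nonterminal (rightOf g r)] := by
  obtain ⟨B, C, hout⟩ := h
  rw [hout, leftOf_eq g hout, rightOf_eq g hout]

def getT? (r : ContextFreeRule T g.NT) : Option T :=
  match r.output with
  | [Symbol.terminal a] => some a
  | _ => none

noncomputable def TagF : Finset (Option T) := insert none (g.rules.image (getT? g))

def validTag (A : g.NT) : Option T → Prop
  | some a => (⟨A, [Symbol.terminal a]⟩ : ContextFreeRule T g.NT) ∈ g.rules
  | none => ∃ r ∈ g.rules, r.input = A ∧ isPair g r

abbrev Cp : Type := ContextFreeRule T g.NT × Option T × Option T × Bool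

def cpChild (c : Cp g) : g.NT := if c.2.2.2 then rightOf g c.1 else leftOf g c.1

def cpTag (c : Cp g) : Option T := if c.2.2.2 then c.2.2.1 else c.2.1

abbrev NT5 : Type := Option (Cp g)

def dOut (r' : ContextFreeRule T g.NT) (i j : Option T) : List (Symbol T (NT5 g)) :=
  [Symbol.nonterminal (some (r', i, j, false)), Symbol.nonterminal (some (r', i, j, true))]

noncomputable def expandPair (X : NT5 g) (A : g.NT) : Finset (ContextFreeRule T (NT5 g)) :=
  ((g.rules ×ˢ (TagF g ×ˢ TagF g)).filter (fun x =>
      x.1.input = A ∧ isPair g x.1 ∧ validTag g (leftOf g x.1) x.2.1 ∧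
        validTag g (rightOf g x.1) x.2.2)).image
    (fun x => ⟨X, dOut g x.1 x.2.1 x.2.2⟩)

lemma mem_expandPair {X : NT5 g} {A : g.NT} {ρ : ContextFreeRule T (NT5 g)} :
    ρ ∈ expandPair g X A ↔ ∃ r' ∈ g.rules, ∃ i ∈ TagF g, ∃ j ∈ TagF g,
      r'.input = A ∧ isPair g r' ∧ validTag g (leftOf g r') i ∧ validTag g (rightOf g r') j ∧
        ρ = ⟨X, dOut g r' i j⟩ := by
  simp only [expandPair, Finset.mem_image, Finset.mem_filter, Finset.mem_product, Prod.exists]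
  constructor
  · rintro ⟨r', i, j, ⟨⟨hr, hi, hj⟩, hinp, hp, hvi, hvj⟩, rfl⟩
    exact ⟨r', hr, i, hi, j, hj, hinp, hp, hvi, hvj, rfl⟩
  · rintro ⟨r', hr, i, hi, j, hj, hinp, hp, hvi, hvj, rfl⟩
    exact ⟨r', i, j, ⟨⟨hr, hi, hj⟩, hinp, hp, hvi, hvj⟩, rfl⟩

noncomputable def copiesF : Finset (Cp g) :=
  (g.rules ×ˢ (TagF g ×ˢ (TagF g ×ˢ ({false, true} : Finset Bool)))).filter
    (fun c => isPair g c.1 ∧ validTag g (leftOf g c.1) c.2.1 ∧ validTag g (rightOf g c.1) c.2.2.1)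

lemma mem_copiesF {c : Cp g} :
    c ∈ copiesF g ↔ c.1 ∈ g.rules ∧ c.2.1 ∈ TagF g ∧ c.2.2.1 ∈ TagF g ∧ isPair g c.1 ∧
      validTag g (leftOf g c.1) c.2.1 ∧ validTag g (rightOf g c.1) c.2.2.1 := by
  obtain ⟨r, i, j, s⟩ := c
  simp only [copiesF, Finset.mem_filter, Finset.mem_product]
  cases s <;> simp <;> tauto

noncomputable def copyRules (c : Cp g) : Finset (ContextFreeRule T (NT5 g)) :=
  match cpTag g c with
  | some a => {⟨some c, [Symbol.terminal a]⟩}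
  | none => expandPair g (some c) (cpChild g c)

lemma copyRules_some {c : Cp g} {a : T} (h : cpTag g c = some a) :
    copyRules g c = {⟨some c, [Symbol.terminal a]⟩} := by
  rw [copyRules, h]

lemma copyRules_none {c : Cp g} (h : cpTag g c = none) :
    copyRules g c = expandPair g (some c) (cpChild g c) := by
  rw [copyRules, h]

def sym5 : Symbol T g.NT → Symbol T (NT5 g)
  | .terminal a => .terminal a
  | .nonterminal _ => .nonterminal none

noncomputable def sRules : Finset (ContextFreeRule T (NT5 g)) :=
  (g.rules.filter (fun r => r.input = g.initial ∧
      (r.output = [] ∨ ∃ a, r.output = [Symbol.terminal a]))).image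
    (fun r => ⟨none, r.output.map (sym5 g)⟩)

noncomputable def G5 : ContextFreeGrammar.{0} T :=
  ⟨NT5 g, none, (sRules g ∪ expandPair g none g.initial) ∪ (copiesF g).biUnion (copyRules g)⟩

attribute [reducible] G5

lemma mem_G5 {ρ : ContextFreeRule T (NT5 g)} :
    ρ ∈ (G5 g).rules ↔
      (∃ r ∈ g.rules, r.input = g.initial ∧
        ((r.output = [] ∧ ρ = ⟨none, []⟩) ∨
          ∃ a, r.output = [Symbol.terminal a] ∧ ρ = ⟨none, [Symbol.terminal a]⟩)) ∨
      ρ ∈ expandPair g none g.initial ∨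
      ∃ c ∈ copiesF g, ρ ∈ copyRules g c := by
  simp only [G5, Finset.mem_union, Finset.mem_biUnion]
  constructor
  · rintro ((h | h) | h)
    · left
      simp only [sRules, Finset.mem_image, Finset.mem_filter] at h
      obtain ⟨r, ⟨hr, hinp, hsh⟩, rfl⟩ := h
      refine ⟨r, hr, hinp, ?_⟩
      rcases hsh with h0 | ⟨a, ha⟩
      · exact Or.inl ⟨h0, by rw [h0]; rfl⟩
      · exact Or.inr ⟨a, ha, by rw [ha]; rfl⟩
    · exact Or.inr (Or.inl h)
    · exact Or.inr (Or.inr h)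
  · rintro (⟨r, hr, hinp, hsh⟩ | h | h)
    · refine Or.inl (Or.inl ?_)
      simp only [sRules, Finset.mem_image, Finset.mem_filter]
      rcases hsh with ⟨h0, rfl⟩ | ⟨a, ha, rfl⟩
      · exact ⟨r, ⟨hr, hinp, Or.inl h0⟩, by rw [h0]; rfl⟩
      · exact ⟨r, ⟨hr, hinp, Or.inr ⟨a, ha⟩⟩, by rw [ha]; rfl⟩
    · exact Or.inl (Or.inr h)
    · exact Or.inr h

/-- Any pair-output rule of `G5` has a `dOut` output. -/
lemma G5_pair_shape {ρ : ContextFreeRule T (NT5 g)} (hρ : ρ ∈ (G5 g).rules)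
    {X1 X2 : NT5 g} (hout : ρ.output = [Symbol.nonterminal X1, Symbol.nonterminal X2]) :
    ∃ r' i j, X1 = some (r', i, j, false) ∧ X2 = some (r', i, j, true) := by
  rcases (mem_G5 g).mp hρ with ⟨r, -, -, hsh⟩ | h | ⟨c, -, h⟩
  · rcases hsh with ⟨-, rfl⟩ | ⟨a, -, rfl⟩ <;> simp at hout
  · obtain ⟨r', -, i, -, j, -, -, -, -, -, rfl⟩ := (mem_expandPair g).mp h
    simp only [dOut, List.cons.injEq] at hout
    obtain ⟨h1, h2, -⟩ := hout
    exact ⟨r', i, j, (Symbol.nonterminal.inj h1).symm, (Symbol.nonterminal.inj h2).symm⟩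
  · rcases hc : cpTag g c with _ | a
    · rw [copyRules_none g hc] at h
      obtain ⟨r', -, i, -, j, -, -, -, -, -, rfl⟩ := (mem_expandPair g).mp h
      simp only [dOut, List.cons.injEq] at hout
      obtain ⟨h1, h2, -⟩ := hout
      exact ⟨r', i, j, (Symbol.nonterminal.inj h1).symm, (Symbol.nonterminal.inj h2).symm⟩
    · rw [copyRules_some g hc] at h
      rw [Finset.mem_singleton] at h
      subst h
      simp at hout

lemma G5_input_some {ρ : ContextFreeRule T (NT5 g)} (hρ : ρ ∈ (G5 g).rules)
    {c : Cp g} (hinp : ρ.input = some c) : c ∈ copiesF g ∧ ρ ∈ copyRules g c := by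
  rcases (mem_G5 g).mp hρ with ⟨r, -, -, hsh⟩ | h | ⟨c', hc', h⟩
  · rcases hsh with ⟨-, rfl⟩ | ⟨a, -, rfl⟩ <;> simp at hinp
  · obtain ⟨r', -, i, -, j, -, -, -, -, -, rfl⟩ := (mem_expandPair g).mp h
    simp at hinp
  · have : ρ.input = some c' := by
      rcases hc : cpTag g c' with _ | a
      · rw [copyRules_none g hc] at h
        obtain ⟨r', -, i, -, j, -, -, -, -, -, rfl⟩ := (mem_expandPair g).mp h
        rfl
      · rw [copyRules_some g hc, Finset.mem_singleton] at h
        rw [h]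
    rw [this] at hinp
    obtain rfl := Option.some.inj hinp.symm
    exact ⟨hc', h⟩

lemma G5_chomsky : IsChomskyNF (G5 g) := by
  constructor
  · intro ρ hρ
    rcases (mem_G5 g).mp hρ with ⟨r, -, -, hsh⟩ | h | ⟨c, -, h⟩
    · rcases hsh with ⟨-, rfl⟩ | ⟨a, -, rfl⟩
      · exact Or.inr (Or.inr ⟨rfl, rfl⟩)
      · exact Or.inr (Or.inl ⟨a, rfl⟩)
    · obtain ⟨r', -, i, -, j, -, -, -, -, -, rfl⟩ := (mem_expandPair g).mp h
      exact Or.inl ⟨_, _, rfl⟩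
    · rcases hc : cpTag g c with _ | a
      · rw [copyRules_none g hc] at h
        obtain ⟨r', -, i, -, j, -, -, -, -, -, rfl⟩ := (mem_expandPair g).mp h
        exact Or.inl ⟨_, _, rfl⟩
      · rw [copyRules_some g hc, Finset.mem_singleton] at h
        subst h
        exact Or.inr (Or.inl ⟨a, rfl⟩)
  · intro ρ hρ
    have hout : ρ.output = [] ∨ (∃ a, ρ.output = [Symbol.terminal a]) ∨
        ∃ r' i j, ρ.output = dOut g r' i j := by
      rcases (mem_G5 g).mp hρ with ⟨r, -, -, hsh⟩ | h | ⟨c, -, h⟩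
      · rcases hsh with ⟨-, rfl⟩ | ⟨a, -, rfl⟩
        · exact Or.inl rfl
        · exact Or.inr (Or.inl ⟨a, rfl⟩)
      · obtain ⟨r', -, i, -, j, -, -, -, -, -, rfl⟩ := (mem_expandPair g).mp h
        exact Or.inr (Or.inr ⟨r', i, j, rfl⟩)
      · rcases hc : cpTag g c with _ | a
        · rw [copyRules_none g hc] at h
          obtain ⟨r', -, i, -, j, -, -, -, -, -, rfl⟩ := (mem_expandPair g).mp h
          exact Or.inr (Or.inr ⟨r', i, j, rfl⟩)
        · rw [copyRules_some g hc, Finset.mem_singleton] at h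
          subst h
          exact Or.inr (Or.inl ⟨a, rfl⟩)
    have hinit : (G5 g).initial = none := rfl
    rw [hinit]
    rcases hout with h | ⟨a, h⟩ | ⟨r', i, j, h⟩ <;> rw [h] <;> simp [dOut]

lemma G5_dyck : IsDyckNF (G5 g) := by
  refine ⟨G5_chomsky g, ?_, ?_, ?_⟩
  · intro ρ hρ a hout hinp ρ' hρ' hinp'
    have hin : (G5 g).initial = none := rfl
    rw [hin] at hinp
    obtain ⟨c, hcinp⟩ : ∃ c, ρ.input = some c := Option.ne_none_iff_exists'.mp hinp
    obtain ⟨hcF, hcr⟩ := G5_input_some g hρ hcinp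
    obtain ⟨hcF', hcr'⟩ := G5_input_some g hρ' (hinp'.trans hcinp)
    rcases hc : cpTag g c with _ | b
    · rw [copyRules_none g hc] at hcr
      obtain ⟨r', -, i, -, j, -, -, -, -, -, rfl⟩ := (mem_expandPair g).mp hcr
      simp [dOut] at hout
    · rw [copyRules_some g hc, Finset.mem_singleton] at hcr hcr'
      rw [hcr', hcr]
  · intro ρ hρ ρ' hρ' A B B' hout hout'
    obtain ⟨r1, i1, j1, hA, hB⟩ := G5_pair_shape g hρ hout
    obtain ⟨r2, i2, j2, hB', hA'⟩ := G5_pair_shape g hρ' hout'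
    rw [hA] at hA'
    simp at hA'
  · intro ρ hρ ρ' hρ' A A' B B' hout hout'
    obtain ⟨r1, i1, j1, hA, hB⟩ := G5_pair_shape g hρ hout
    obtain ⟨r2, i2, j2, hA', hB'⟩ := G5_pair_shape g hρ' hout'
    constructor
    · rintro rfl
      rw [hB] at hB'
      simp only [Option.some.injEq, Prod.mk.injEq] at hB'
      rw [hA, hA']
      simp [hB'.1, hB'.2.1, hB'.2.2]
    · rintro rfl
      rw [hA] at hA'
      simp only [Option.some.injEq, Prod.mk.injEq] at hA'
      rw [hB, hB']
      simp [hA'.1, hA'.2.1, hA'.2.2]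

def back5 : Symbol T (NT5 g) → List (Symbol T g.NT)
  | .terminal a => [.terminal a]
  | .nonterminal none => [.nonterminal g.initial]
  | .nonterminal (some c) => [.nonterminal (cpChild g c)]

lemma cpChild_false (r' : ContextFreeRule T g.NT) (i j : Option T) :
    cpChild g (r', i, j, false) = leftOf g r' := by simp [cpChild]

lemma cpChild_true (r' : ContextFreeRule T g.NT) (i j : Option T) :
    cpChild g (r', i, j, true) = rightOf g r' := by simp [cpChild]

lemma cpTag_false (r' : ContextFreeRule T g.NT) (i j : Option T) :
    cpTag g (r', i, j, false) = i := by simp [cpTag]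

lemma cpTag_true (r' : ContextFreeRule T g.NT) (i j : Option T) :
    cpTag g (r', i, j, true) = j := by simp [cpTag]

lemma copiesF_termRule {c : Cp g} (hc : c ∈ copiesF g) {a : T} (h : cpTag g c = some a) :
    (⟨cpChild g c, [Symbol.terminal a]⟩ : ContextFreeRule T g.NT) ∈ g.rules := by
  obtain ⟨-, -, -, -, hvl, hvr⟩ := (mem_copiesF g).mp hc
  obtain ⟨r', i, j, s⟩ := c
  cases s
  · rw [cpTag_false] at h
    rw [cpChild_false]
    subst h
    exact hvl
  · rw [cpTag_true] at h
    rw [cpChild_true]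
    subst h
    exact hvr

lemma expandPair_derives {X : NT5 g} {A : g.NT} {ρ : ContextFreeRule T (NT5 g)}
    (h : ρ ∈ expandPair g X A) :
    g.Derives [Symbol.nonterminal A] (ρ.output.flatMap (back5 g)) := by
  obtain ⟨r', hr', i, -, j, -, hinp, hp, -, -, rfl⟩ := (mem_expandPair g).mp h
  have hflat : (dOut g r' i j).flatMap (back5 g) =
      [Symbol.nonterminal (leftOf g r'), Symbol.nonterminal (rightOf g r')] := by
    simp [dOut, back5, cpChild_false, cpChild_true]
  rw [hflat, ← pair_out g hp, ← hinp]
  exact Produces.single ⟨r', hr', ContextFreeRule.Rewrites.input_output⟩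

lemma G5_sub (w : List T) (h : w ∈ (G5 g).language) : w ∈ g.language := by
  have hR : ∀ ρ ∈ (G5 g).rules,
      g.Derives (back5 g (Symbol.nonterminal ρ.input)) (ρ.output.flatMap (back5 g)) := by
    intro ρ hρ
    rcases (mem_G5 g).mp hρ with ⟨r, hr, hinp, hsh⟩ | h' | ⟨c, hcF, h'⟩
    · rcases hsh with ⟨h0, rfl⟩ | ⟨a, ha, rfl⟩
      · simp only [back5, List.flatMap_nil]
        refine Produces.single ⟨r, hr, ?_⟩
        have h' := ContextFreeRule.Rewrites.input_output (r := r)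
        rwa [hinp, h0] at h'
      · simp only [back5, List.flatMap_cons, List.flatMap_nil, List.append_nil]
        refine Produces.single ⟨r, hr, ?_⟩
        rw [← hinp, ← ha]
        exact ContextFreeRule.Rewrites.input_output
    · have hX : ρ.input = none := by
        obtain ⟨r', -, i, -, j, -, -, -, -, -, rfl⟩ := (mem_expandPair g).mp h'
        rfl
      rw [hX]
      exact expandPair_derives g h'
    · rcases hc : cpTag g c with _ | a
      · rw [copyRules_none g hc] at h'
        have hX : ρ.input = some c := by
          obtain ⟨r', -, i, -, j, -, -, -, -, -, rfl⟩ := (mem_expandPair g).mp h'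
          rfl
        rw [hX]
        exact expandPair_derives g h'
      · rw [copyRules_some g hc, Finset.mem_singleton] at h'
        subst h'
        simp only [back5, List.flatMap_cons, List.flatMap_nil, List.append_nil]
        exact Produces.single ⟨_, copiesF_termRule g hcF hc,
          ContextFreeRule.Rewrites.input_output⟩
  have h2 := lift_derives (g := G5 g) (g' := g) (back5 g) (fun a => rfl) hR h
  rw [flatMap_map_terminal _ (fun a => rfl)] at h2
  simpa [back5] using h2

lemma dyck_hard
    (hcnf : ∀ r ∈ g.rules,
      (∃ B C, r.output = [Symbol.nonterminal B, Symbol.nonterminal C]) ∨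
      (∃ a, r.output = [Symbol.terminal a]) ∨ (r.input = g.initial ∧ r.output = []))
    (hno : NoInitRHS g) :
    ∀ n (A : g.NT) (w : List T),
      DerivesIn g n [Symbol.nonterminal A] (w.map Symbol.terminal) →
      ((A = g.initial →
          (G5 g).Derives [Symbol.nonterminal (none : NT5 g)] (w.map Symbol.terminal)) ∧
       (A ≠ g.initial → ∃ i, i ∈ TagF g ∧ validTag g A i ∧
         ∀ c : Cp g, c ∈ copiesF g → cpChild g c = A → cpTag g c = i →
           (G5 g).Derives [Symbol.nonterminal (some c)] (w.map Symbol.terminal))) := by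
  intro n
  induction n using Nat.strong_induction_on with
  | _ n ih =>
    intro A w h
    cases n with
    | zero => exact absurd h.symm (by intro hh; exact map_terminal_eq_nt_single hh)
    | succ n =>
      obtain ⟨r, hr, hinp, hd⟩ := derivesIn_nt_inv h
      rcases hcnf r hr with ⟨B, C, hout⟩ | ⟨a, hout⟩ | ⟨hinpInit, hout⟩
      · -- pair rule
        have hBne : B ≠ g.initial := by
          intro hB
          exact hno r hr (by rw [hout, hB]; simp)
        have hCne : C ≠ g.initial := by
          intro hC
          exact hno r hr (by rw [hout, hC]; simp)
        rw [hout] at hd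
        have hd' : DerivesIn g n ([Symbol.nonterminal B] ++ [Symbol.nonterminal C])
            (w.map Symbol.terminal) := by simpa using hd
        obtain ⟨y1, y2, n1, n2, hy, hn, h1, h2⟩ := derivesIn_append_split hd'
        obtain ⟨w1, w2, rfl, hw1, hw2⟩ := List.map_eq_append_iff.mp hy
        subst hw1; subst hw2
        obtain ⟨i, hiT, hiv, hBc⟩ := (ih n1 (by omega) B w1 h1).2 hBne
        obtain ⟨j, hjT, hjv, hCc⟩ := (ih n2 (by omega) C w2 h2).2 hCne
        have hp : isPair g r := ⟨B, C, hout⟩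
        have memL : ((r, i, j, false) : Cp g) ∈ copiesF g :=
          (mem_copiesF g).mpr ⟨hr, hiT, hjT, hp,
            by rw [leftOf_eq g hout]; exact hiv, by rw [rightOf_eq g hout]; exact hjv⟩
        have memR : ((r, i, j, true) : Cp g) ∈ copiesF g :=
          (mem_copiesF g).mpr ⟨hr, hiT, hjT, hp,
            by rw [leftOf_eq g hout]; exact hiv, by rw [rightOf_eq g hout]; exact hjv⟩
        have dL := hBc (r, i, j, false) memL
          (by rw [cpChild_false, leftOf_eq g hout]) (cpTag_false g r i j)
        have dR := hCc (r, i, j, true) memR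
          (by rw [cpChild_true, rightOf_eq g hout]) (cpTag_true g r i j)
        have combined : (G5 g).Derives (dOut g r i j)
            ((w1 ++ w2).map Symbol.terminal) := by
          have c1 := dL.append_right [Symbol.nonterminal (some ((r, i, j, true) : Cp g))]
          have c2 := dR.append_left (w1.map Symbol.terminal)
          rw [List.map_append]
          have c1' : (G5 g).Derives (dOut g r i j)
              (w1.map Symbol.terminal ++ [Symbol.nonterminal (some ((r, i, j, true) : Cp g))]) := by
            simpa [dOut] using c1
          exact c1'.trans c2
        constructor
        · rintro rfl
          have hmem : (⟨none, dOut g r i j⟩ : ContextFreeRule T (NT5 g)) ∈ (G5 g).rules :=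
            (mem_G5 g).mpr (Or.inr (Or.inl ((mem_expandPair g).mpr
              ⟨r, hr, i, hiT, j, hjT, hinp, hp,
                by rw [leftOf_eq g hout]; exact hiv, by rw [rightOf_eq g hout]; exact hjv, rfl⟩)))
          refine Produces.trans_derives ⟨_, hmem, ?_⟩ combined
          simpa using ContextFreeRule.Rewrites.input_output
            (r := (⟨none, dOut g r i j⟩ : ContextFreeRule T (NT5 g)))
        · intro hAne
          refine ⟨none, Finset.mem_insert_self _ _, ⟨r, hr, hinp, hp⟩, ?_⟩
          intro c hcF hchild htag
          have hmem : (⟨some c, dOut g r i j⟩ : ContextFreeRule T (NT5 g)) ∈ (G5 g).rules := by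
            refine (mem_G5 g).mpr (Or.inr (Or.inr ⟨c, hcF, ?_⟩))
            rw [copyRules_none g htag]
            exact (mem_expandPair g).mpr ⟨r, hr, i, hiT, j, hjT, by rw [hchild]; exact hinp, hp,
              by rw [leftOf_eq g hout]; exact hiv, by rw [rightOf_eq g hout]; exact hjv, rfl⟩
          refine Produces.trans_derives ⟨_, hmem, ?_⟩ combined
          simpa using ContextFreeRule.Rewrites.input_output
            (r := (⟨some c, dOut g r i j⟩ : ContextFreeRule T (NT5 g)))
      · -- terminal rule
        rw [hout] at hd
        have hweq : (w.map Symbol.terminal : List (Symbol T g.NT)) = [Symbol.terminal a] :=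
          derivesIn_terminal_eq (w := [a]) (by simpa using hd)
        obtain rfl : w = [a] := map_terminal_eq_terminal_single hweq
        constructor
        · rintro rfl
          have hmem : (⟨none, [Symbol.terminal a]⟩ : ContextFreeRule T (NT5 g)) ∈ (G5 g).rules :=
            (mem_G5 g).mpr (Or.inl ⟨r, hr, hinp, Or.inr ⟨a, hout, rfl⟩⟩)
          refine Produces.single ⟨_, hmem, ?_⟩
          simpa using ContextFreeRule.Rewrites.input_output
            (r := (⟨none, [Symbol.terminal a]⟩ : ContextFreeRule T (NT5 g)))
        · intro hAne
          have hrA : (⟨A, [Symbol.terminal a]⟩ : ContextFreeRule T g.NT) ∈ g.rules := by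
            rw [← hinp, ← hout]
            exact hr
          refine ⟨some a, ?_, hrA, ?_⟩
          · refine Finset.mem_insert_of_mem (Finset.mem_image.mpr ⟨r, hr, ?_⟩)
            rw [getT?, hout]
          · intro c hcF hchild htag
            have hmem : (⟨some c, [Symbol.terminal a]⟩ : ContextFreeRule T (NT5 g)) ∈
                (G5 g).rules := by
              refine (mem_G5 g).mpr (Or.inr (Or.inr ⟨c, hcF, ?_⟩))
              rw [copyRules_some g htag]
              simp
            refine Produces.single ⟨_, hmem, ?_⟩
            simpa using ContextFreeRule.Rewrites.input_output
              (r := (⟨some c, [Symbol.terminal a]⟩ : ContextFreeRule T (NT5 g)))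
      · -- epsilon rule
        rw [hout] at hd
        have hweq : (w.map Symbol.terminal : List (Symbol T g.NT)) = [] :=
          derivesIn_terminal_eq (w := ([] : List T)) (by simpa using hd)
        obtain rfl : w = [] := by simpa using hweq
        constructor
        · rintro rfl
          have hmem : (⟨none, []⟩ : ContextFreeRule T (NT5 g)) ∈ (G5 g).rules :=
            (mem_G5 g).mpr (Or.inl ⟨r, hr, hinpInit, Or.inl ⟨hout, rfl⟩⟩)
          refine Produces.single ⟨_, hmem, ?_⟩
          simpa using ContextFreeRule.Rewrites.input_output
            (r := (⟨none, []⟩ : ContextFreeRule T (NT5 g)))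
        · intro hAne
          exact absurd (hinp ▸ hinpInit) hAne

lemma lang_G5
    (hcnf : ∀ r ∈ g.rules,
      (∃ B C, r.output = [Symbol.nonterminal B, Symbol.nonterminal C]) ∨
      (∃ a, r.output = [Symbol.terminal a]) ∨ (r.input = g.initial ∧ r.output = []))
    (hno : NoInitRHS g) : g.language = (G5 g).language := by
  ext w
  constructor
  · intro hw
    obtain ⟨n, hn⟩ := Derives.derivesIn hw
    exact (dyck_hard g hcnf hno n g.initial w hn).1 rfl
  · exact G5_sub g w

end Dyck

/-- For each context-free grammar `G = (N, T, P, S)` there exists a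
context-free grammar `G'` in Dyck normal form with `L(G) = L(G')`. -/
theorem exists_dyckNF (G : ContextFreeGrammar.{0} T) :
    ∃ G' : ContextFreeGrammar.{0} T, IsDyckNF G' ∧ G.language = G'.language := by
  have hsh1 := shape4_G1 G
  have hno1 := noInitRHS_G1 G
  have hsh2 := shape4_G2 (G1 G) hsh1
  have heps2 : ∀ r ∈ (G2 (G1 G)).rules, r.output = [] → r.input = (G2 (G1 G)).initial :=
    fun r hr h => eps_G2 (G1 G) hr h
  have hno2 := noInitRHS_G2 (G1 G) hno1
  obtain ⟨hcnf3, hno3⟩ := G3_chomsky (G2 (G1 G)) hsh2 heps2 hno2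
  refine ⟨G5 (G3 (G2 (G1 G))), G5_dyck _, ?_⟩
  calc G.language = (G1 G).language := lang_G1 G
    _ = (G2 (G1 G)).language := lang_G2 (G1 G) hsh1
    _ = (G3 (G2 (G1 G))).language := lang_G3 (G2 (G1 G)) hsh2
    _ = _ := lang_G5 _ hcnf3 hno3


end CS
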